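/- The semi-discrete particle-mesh equations are canonically Hamiltonian with Hamiltonian H(Q,P) = ½⟨u(Q,P), A u(Q,P)⟩, where u(Q,P) = A⁻¹ m(Q,P) and m_k(Q,P) = Σ_β P_β ψ_k(Q_β). Precisely: H is differentiable in (Q,P), and for every β and every direction w ∈ ℝ², (i) the partial derivative of H with respect to P_β in direction w equals (Σ_k u_k(Q,P) ψ_k(Q_β)) · w, and (ii) the partial derivative of H with respect to Q_β in direction w equals Σ_k (P_β · u_k(Q,P)) (∇ψ_k(Q_β) · w). Consequently Hamilton's equations Q̇_β = ∂H/∂P_β, Ṗ_β = −∂H/∂Q_β coincide with the semi-discrete equations Q̇_β = Σ_k u_k ψ_k(Q_β) and Ṗ_β = −Σ_k (P_β · u_k) ∇ψ_k(Q_β). -/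

import Mathlib

open scoped RealInnerProductSpace BigOperators

section AuxPM

variable {np ng : ℕ}

private noncomputable def pmM (ψ : Fin ng → EuclideanSpace ℝ (Fin 2) → ℝ)
    (Q P : Fin np → EuclideanSpace ℝ (Fin 2)) : Fin ng → EuclideanSpace ℝ (Fin 2) :=
  fun k => ∑ β, ψ k (Q β) • P β

private lemma pmM_update_P (ψ : Fin ng → EuclideanSpace ℝ (Fin 2) → ℝ)
    (Q P : Fin np → EuclideanSpace ℝ (Fin 2)) (β : Fin np) (x : EuclideanSpace ℝ (Fin 2)) :
    pmM ψ Q (Function.update P β x) = fun k => pmM ψ Q P k + ψ k (Q β) • (x - P β) := by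
  funext k
  have h : (fun β' => ψ k (Q β') • (Function.update P β x) β')
      = Function.update (fun β' => ψ k (Q β') • P β') β (ψ k (Q β) • x) := by
    funext β'
    rcases eq_or_ne β' β with rfl | hne
    · simp
    · simp [Function.update_of_ne hne]
  simp only [pmM, h]
  rw [Finset.sum_update_of_mem (Finset.mem_univ β)]
  rw [Finset.sum_eq_sum_sdiff_singleton_add (Finset.mem_univ β)
    (fun β' => ψ k (Q β') • P β')]
  rw [smul_sub]
  abel

private lemma pmM_update_Q (ψ : Fin ng → EuclideanSpace ℝ (Fin 2) → ℝ)
    (Q P : Fin np → EuclideanSpace ℝ (Fin 2)) (β : Fin np) (x : EuclideanSpace ℝ (Fin 2)) :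
    pmM ψ (Function.update Q β x) P = fun k => pmM ψ Q P k + (ψ k x - ψ k (Q β)) • P β := by
  funext k
  have h : (fun β' => ψ k ((Function.update Q β x) β') • P β')
      = Function.update (fun β' => ψ k (Q β') • P β') β (ψ k x • P β) := by
    funext β'
    rcases eq_or_ne β' β with rfl | hne
    · simp
    · simp [Function.update_of_ne hne]
  simp only [pmM, h]
  rw [Finset.sum_update_of_mem (Finset.mem_univ β)]
  rw [Finset.sum_eq_sum_sdiff_singleton_add (Finset.mem_univ β)
    (fun β' => ψ k (Q β') • P β')]
  rw [sub_smul]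
  abel

end AuxPM

theorem semidiscrete_equations_are_hamiltonian
    {np ng : ℕ}
    (ψ : Fin ng → EuclideanSpace ℝ (Fin 2) → ℝ)
    (hψ : ∀ k, Differentiable ℝ (ψ k))
    (A : (Fin ng → EuclideanSpace ℝ (Fin 2)) →ₗ[ℝ] (Fin ng → EuclideanSpace ℝ (Fin 2)))
    (hAsymm : ∀ x y, ∑ k, ⟪A x k, y k⟫ = ∑ k, ⟪x k, A y k⟫)
    (hApos : ∀ x, x ≠ 0 → 0 < ∑ k, ⟪A x k, x k⟫)
    (hAinv : Function.Bijective A)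
    (uQP : (Fin np → EuclideanSpace ℝ (Fin 2)) → (Fin np → EuclideanSpace ℝ (Fin 2)) →
      (Fin ng → EuclideanSpace ℝ (Fin 2)))
    (huQP : ∀ Q P, A (uQP Q P) = fun k => ∑ β, ψ k (Q β) • P β)
    (H : (Fin np → EuclideanSpace ℝ (Fin 2)) → (Fin np → EuclideanSpace ℝ (Fin 2)) → ℝ)
    (hH : ∀ Q P, H Q P = (1 / 2) * ∑ k, ⟪uQP Q P k, A (uQP Q P) k⟫) :
    Differentiable ℝ
        (fun QP : (Fin np → EuclideanSpace ℝ (Fin 2)) × (Fin np → EuclideanSpace ℝ (Fin 2)) =>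
          H QP.1 QP.2)
      ∧ (∀ Q P (β : Fin np) (w : EuclideanSpace ℝ (Fin 2)),
          HasDerivAt (fun ε : ℝ => H Q (Function.update P β (P β + ε • w)))
            ⟪∑ k, ψ k (Q β) • uQP Q P k, w⟫ 0)
      ∧ (∀ Q P (β : Fin np) (w : EuclideanSpace ℝ (Fin 2)),
          HasDerivAt (fun ε : ℝ => H (Function.update Q β (Q β + ε • w)) P)
            (∑ k, ⟪P β, uQP Q P k⟫ * ⟪gradient (ψ k) (Q β), w⟫) 0) := by
  classical
  set e : (Fin ng → EuclideanSpace ℝ (Fin 2)) ≃ₗ[ℝ] (Fin ng → EuclideanSpace ℝ (Fin 2)) :=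
    LinearEquiv.ofBijective A hAinv with he
  have hAe : ∀ x, A (e.symm x) = x := fun x => e.apply_symm_apply x
  have hu : ∀ Q P, uQP Q P = e.symm (pmM ψ Q P) := by
    intro Q P
    rw [LinearEquiv.eq_symm_apply]
    exact huQP Q P
  have hAu : ∀ Q P, A (uQP Q P) = pmM ψ Q P := fun Q P => huQP Q P
  have hHrep : ∀ Q P, H Q P
      = (1 / 2) * ∑ k, ⟪e.symm (pmM ψ Q P) k, pmM ψ Q P k⟫ := by
    intro Q P
    rw [hH Q P]
    congr 1
    refine Finset.sum_congr rfl fun k _ => ?_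
    rw [hAu, hu]
  have hBsymm : ∀ x y,
      ∑ k, ⟪e.symm x k, y k⟫ = ∑ k, ⟪x k, e.symm y k⟫ := by
    intro x y
    calc ∑ k, ⟪e.symm x k, y k⟫
        = ∑ k, ⟪e.symm x k, A (e.symm y) k⟫ := by rw [hAe]
      _ = ∑ k, ⟪x k, e.symm y k⟫ := by
          rw [← hAsymm (e.symm x) (e.symm y), hAe]
  have hPsymm : ∀ x y : Fin ng → EuclideanSpace ℝ (Fin 2),
      ∑ k, ⟪x k, y k⟫ = ∑ k, ⟪y k, x k⟫ := by
    intro x y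
    exact Finset.sum_congr rfl fun k _ => real_inner_comm _ _
  set Bc : (Fin ng → EuclideanSpace ℝ (Fin 2)) →L[ℝ] (Fin ng → EuclideanSpace ℝ (Fin 2)) :=
    (e.symm : (Fin ng → EuclideanSpace ℝ (Fin 2)) →ₗ[ℝ]
      (Fin ng → EuclideanSpace ℝ (Fin 2))).toContinuousLinearMap with hBc
  have hBcApply : ∀ x, Bc x = e.symm x := fun _ => rfl
  refine ⟨?_, ?_, ?_⟩
  · -- Differentiability
    have hm : Differentiable ℝ (fun QP : (Fin np → EuclideanSpace ℝ (Fin 2)) ×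
        (Fin np → EuclideanSpace ℝ (Fin 2)) => pmM ψ QP.1 QP.2) := by
      rw [differentiable_pi]
      intro k
      apply Differentiable.fun_sum
      intro β _
      have h1 : Differentiable ℝ (fun QP : (Fin np → EuclideanSpace ℝ (Fin 2)) ×
          (Fin np → EuclideanSpace ℝ (Fin 2)) => QP.1 β) :=
        (differentiable_pi.mp (differentiable_id (𝕜 := ℝ) (E := Fin np → EuclideanSpace ℝ (Fin 2))) β).comp differentiable_fst
      have h2 : Differentiable ℝ (fun QP : (Fin np → EuclideanSpace ℝ (Fin 2)) ×
          (Fin np → EuclideanSpace ℝ (Fin 2)) => QP.2 β) :=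
        (differentiable_pi.mp (differentiable_id (𝕜 := ℝ) (E := Fin np → EuclideanSpace ℝ (Fin 2))) β).comp differentiable_snd
      exact ((hψ k).comp h1).smul h2
    have hBm : Differentiable ℝ (fun QP : (Fin np → EuclideanSpace ℝ (Fin 2)) ×
        (Fin np → EuclideanSpace ℝ (Fin 2)) => Bc (pmM ψ QP.1 QP.2)) :=
      Bc.differentiable.comp hm
    have hdiff : Differentiable ℝ (fun QP : (Fin np → EuclideanSpace ℝ (Fin 2)) ×
        (Fin np → EuclideanSpace ℝ (Fin 2)) =>
          (1 / 2) * ∑ k, ⟪Bc (pmM ψ QP.1 QP.2) k, pmM ψ QP.1 QP.2 k⟫) := by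
      apply Differentiable.const_mul
      apply Differentiable.fun_sum
      intro k _
      exact Differentiable.inner ℝ (differentiable_pi.mp hBm k) (differentiable_pi.mp hm k)
    convert hdiff using 2 with QP
    rw [hHrep]
    rfl
  · -- derivative in P
    intro Q P β w
    set m0 := pmM ψ Q P with hm0
    set u0 := e.symm m0 with hu0
    set v : Fin ng → EuclideanSpace ℝ (Fin 2) := fun k => ψ k (Q β) • w with hv
    set d : ℝ := ∑ k, ⟪v k, u0 k⟫ with hd
    set a : ℝ := (1 / 2) * ∑ k, ⟪u0 k, m0 k⟫ with ha
    set c : ℝ := (1 / 2) * ∑ k, ⟪e.symm v k, v k⟫ with hc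
    have hcurve : (fun ε : ℝ => H Q (Function.update P β (P β + ε • w)))
        = fun ε : ℝ => a + (d * ε + c * ε ^ 2) := by
      funext ε
      rw [hHrep]
      have hmε : pmM ψ Q (Function.update P β (P β + ε • w)) = m0 + ε • v := by
        rw [pmM_update_P]
        funext k
        simp [hv, hm0, smul_smul, mul_comm]
      rw [hmε, map_add, map_smul]
      have key : ∑ k, ⟪(e.symm m0 + ε • e.symm v) k, (m0 + ε • v) k⟫
          = ∑ k, ⟪u0 k, m0 k⟫ + ε * ∑ k, ⟪u0 k, v k⟫
            + ε * ∑ k, ⟪e.symm v k, m0 k⟫ + ε ^ 2 * ∑ k, ⟪e.symm v k, v k⟫ := by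
        simp only [Pi.add_apply, Pi.smul_apply, inner_add_left, inner_add_right,
          real_inner_smul_left, real_inner_smul_right, Finset.sum_add_distrib,
          ← Finset.mul_sum, ← hu0]
        ring
      rw [key]
      have h1 : ∑ k, ⟪u0 k, v k⟫ = d := by rw [hd]; exact hPsymm u0 v
      have h2 : ∑ k, ⟪e.symm v k, m0 k⟫ = d := by
        rw [hd, hBsymm v m0, ← hu0]
      rw [h1, h2, ha, hc]
      ring
    rw [hcurve]
    have hpoly : HasDerivAt (fun ε : ℝ => a + (d * ε + c * ε ^ 2)) d 0 := by
      have h := (((hasDerivAt_id (0:ℝ)).const_mul d).add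
        ((hasDerivAt_pow 2 (0:ℝ)).const_mul c)).const_add a
      simpa using h
    convert hpoly using 1
    rw [hd, sum_inner]
    refine Finset.sum_congr rfl fun k _ => ?_
    rw [hu, hv, ← hm0, ← hu0]
    rw [real_inner_smul_left, real_inner_smul_left, real_inner_comm]
  · -- derivative in Q
    intro Q P β w
    set m0 := pmM ψ Q P with hm0
    set u0 := e.symm m0 with hu0
    set F' : Fin ng → EuclideanSpace ℝ (Fin 2) :=
      fun k => (fderiv ℝ (ψ k) (Q β) w) • P β with hF'
    set f : ℝ → (Fin ng → EuclideanSpace ℝ (Fin 2)) :=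
      fun ε => pmM ψ (Function.update Q β (Q β + ε • w)) P with hf
    have hf0 : f 0 = m0 := by
      rw [hf, hm0]
      simp [Function.update_eq_self]
    have hfderiv : HasDerivAt f F' 0 := by
      rw [hasDerivAt_pi]
      intro k
      have hfk : (fun ε : ℝ => f ε k)
          = fun ε : ℝ => m0 k + (ψ k (Q β + ε • w) - ψ k (Q β)) • P β := by
        funext ε
        simp only [hf, pmM_update_Q, ← hm0]
      rw [hfk]
      have hline : HasDerivAt (fun ε : ℝ => Q β + ε • w) w 0 := by
        simpa using (((hasDerivAt_id (0:ℝ)).smul_const w).const_add (Q β))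
      have hψl : HasDerivAt (fun ε : ℝ => ψ k (Q β + ε • w))
          (fderiv ℝ (ψ k) (Q β) w) 0 := by
        have h := ((hψ k) (Q β + (0:ℝ) • w)).hasFDerivAt.comp_hasDerivAt 0 hline
        simpa [Function.comp_def] using h
      exact ((hψl.sub_const (ψ k (Q β))).smul_const (P β)).const_add (m0 k)
    have hcurve : (fun ε : ℝ => H (Function.update Q β (Q β + ε • w)) P)
        = fun ε : ℝ => (1 / 2) * ∑ k, ⟪Bc (f ε) k, f ε k⟫ := by
      funext ε
      rw [hHrep]
      rfl
    rw [hcurve]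
    have hBf : HasDerivAt (fun ε : ℝ => Bc (f ε)) (Bc F') 0 :=
      Bc.hasFDerivAt.comp_hasDerivAt 0 hfderiv
    have hD : HasDerivAt (fun ε : ℝ => (1 / 2) * ∑ k, ⟪Bc (f ε) k, f ε k⟫)
        ((1 / 2) * ∑ k, (⟪Bc (f 0) k, F' k⟫ + ⟪Bc F' k, f 0 k⟫)) 0 := by
      apply HasDerivAt.const_mul
      apply HasDerivAt.fun_sum
      intro k _
      exact HasDerivAt.inner ℝ (hasDerivAt_pi.mp hBf k) (hasDerivAt_pi.mp hfderiv k)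
    convert hD using 1
    rw [hf0]
    have h1 : ∑ k, (⟪Bc m0 k, F' k⟫ + ⟪Bc F' k, m0 k⟫)
        = ∑ k, ⟪u0 k, F' k⟫ + ∑ k, ⟪e.symm F' k, m0 k⟫ := by
      rw [Finset.sum_add_distrib]
      congr 1
    have h2 : ∑ k, ⟪e.symm F' k, m0 k⟫ = ∑ k, ⟪u0 k, F' k⟫ := by
      rw [hBsymm F' m0, ← hu0, hPsymm]
    rw [h1, h2]
    have h3 : ∀ k, ⟪u0 k, F' k⟫ = ⟪P β, uQP Q P k⟫ * ⟪gradient (ψ k) (Q β), w⟫ := by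
      intro k
      have hg : ⟪gradient (ψ k) (Q β), w⟫ = fderiv ℝ (ψ k) (Q β) w :=
        InnerProductSpace.toDual_symm_apply
      rw [hg, hF', real_inner_smul_right, hu, ← hm0, ← hu0, real_inner_comm]
      ring
    simp only [h3]
    ring
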